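/- Let û : ℤ × ℤ → ℝ satisfy û_{n,m} ≠ 1 for all (n,m), and define u_{n,m} = 2/(1 - û_{n,m}). Then for every (n,m) ∈ ℤ²: u_{n+1,m+1}·u_{n,m+1}·(u_{n+1,m} - 1) = u_{n,m}·u_{n+1,m}·(u_{n,m+1} - 1) holds if and only if (û_{n+1,m} + 1)(û_{n,m} - 1) = (û_{n+1,m+1} - 1)(û_{n,m+1} + 1) holds. In other words, the Möbius point transformation u = 2/(1 - û) maps solutions of the equation u₁,₁(u₀,₁ + c)(u₁,₀ - 1) = u₀,₀(u₁,₀ + c)(u₀,₁ - 1) with c = 0 exactly to solutions of the equation (u₁,₀ + 1)(u₀,₀ - 1) = (u₁,₁ - 1)(u₀,₁ + 1). -/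

import Mathlib

theorem stmt_18 (v : ℤ × ℤ → ℝ) (hv1 : ∀ n m : ℤ, v (n, m) ≠ 1)
    (u : ℤ × ℤ → ℝ) (hu : ∀ n m : ℤ, u (n, m) = 2 / (1 - v (n, m))) :
    ∀ n m : ℤ,
      (u (n + 1, m + 1) * u (n, m + 1) * (u (n + 1, m) - 1)
        = u (n, m) * u (n + 1, m) * (u (n, m + 1) - 1))
      ↔ ((v (n + 1, m) + 1) * (v (n, m) - 1) = (v (n + 1, m + 1) - 1) * (v (n, m + 1) + 1)) := by
  intro n m
  have h00 : 1 - v (n, m) ≠ 0 := sub_ne_zero.mpr (Ne.symm (hv1 n m))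
  have h10 : 1 - v (n + 1, m) ≠ 0 := sub_ne_zero.mpr (Ne.symm (hv1 (n + 1) m))
  have h01 : 1 - v (n, m + 1) ≠ 0 := sub_ne_zero.mpr (Ne.symm (hv1 n (m + 1)))
  have h11 : 1 - v (n + 1, m + 1) ≠ 0 := sub_ne_zero.mpr (Ne.symm (hv1 (n + 1) (m + 1)))
  rw [hu, hu, hu, hu]
  rw [div_sub' h10, div_sub' h01, div_mul_div_comm, div_mul_div_comm,
    div_mul_div_comm, div_mul_div_comm, div_eq_div_iff (by apply mul_ne_zero <;> first | assumption | (apply mul_ne_zero <;> assumption)) (by apply mul_ne_zero <;> first | assumption | (apply mul_ne_zero <;> assumption))]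
  have hc : (1 - v (n + 1, m)) * (1 - v (n, m + 1)) ≠ 0 := mul_ne_zero h10 h01
  constructor <;> intro h
  · have h2 : ((v (n + 1, m) + 1) * (v (n, m) - 1) - (v (n + 1, m + 1) - 1) * (v (n, m + 1) + 1))
        * ((1 - v (n + 1, m)) * (1 - v (n, m + 1))) = 0 := by linear_combination (-1/4) * h
    rcases mul_eq_zero.mp h2 with h3 | h3
    · linarith [sub_eq_zero.mp h3]
    · exact absurd h3 hc
  · linear_combination (-4 * (1 - v (n + 1, m)) * (1 - v (n, m + 1))) * h
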